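/- Let a, b, c > 0 and α, β, γ > 1 with β ≠ α·γ. Then there exists δ > 0 such that the three hypersurfaces a·x₂ = x₁^α, b·x₂ = x₃^β, c·x₁ = x₃^γ in the positive octant of ℝ³ determine (by choosing thin or thick side of each) at least one triple of cusps whose common intersection with (0, δ)³ is empty. -/

import Mathlib

/-- Key lemma: if `0 < d`, for `x` small enough we cannot have `x ^ e < K * x ^ (e + d)`. -/
lemma key_small (K e d : ℝ) (hK : 0 < K) (hd : 0 < d) :
    ∃ δ > 0, ∀ x : ℝ, 0 < x → x < δ → ¬ (x ^ e < K * x ^ (e + d)) := by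
  refine ⟨min 1 (K⁻¹ ^ d⁻¹), lt_min one_pos (Real.rpow_pos_of_pos (inv_pos.mpr hK) _), ?_⟩
  intro x hx hxδ hcon
  have hxd : x ^ d < K⁻¹ := by
    have h1 : x ^ d < (K⁻¹ ^ d⁻¹) ^ d :=
      Real.rpow_lt_rpow hx.le (lt_of_lt_of_le hxδ (min_le_right _ _)) hd
    have h2 : (K⁻¹ ^ d⁻¹) ^ d = K⁻¹ := by
      rw [← Real.rpow_mul (le_of_lt (inv_pos.mpr hK)), inv_mul_cancel₀ hd.ne', Real.rpow_one]
    linarith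
  have hsplit : x ^ (e + d) = x ^ e * x ^ d := Real.rpow_add hx e d
  have hxe : (0:ℝ) < x ^ e := Real.rpow_pos_of_pos hx e
  rw [hsplit] at hcon
  have hlt : K * (x ^ e * x ^ d) < K * (x ^ e * K⁻¹) :=
    mul_lt_mul_of_pos_left (mul_lt_mul_of_pos_left hxd hxe) hK
  have heq : K * (x ^ e * K⁻¹) = x ^ e := by field_simp
  linarith

theorem stmt_13 (a b c α β γ : ℝ) (ha : 0 < a) (hb : 0 < b) (hc : 0 < c)
    (hα : 1 < α) (hβ : 1 < β) (hγ : 1 < γ) (h : β ≠ α * γ) :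
    ∃ (s₁ s₂ s₃ : Bool), ∃ δ > 0, ¬ ∃ x₁ x₂ x₃ : ℝ,
      (0 < x₁ ∧ x₁ < δ) ∧ (0 < x₂ ∧ x₂ < δ) ∧ (0 < x₃ ∧ x₃ < δ) ∧
      (if s₁ then a * x₂ < x₁ ^ α else a * x₂ > x₁ ^ α) ∧
      (if s₂ then b * x₂ < x₃ ^ β else b * x₂ > x₃ ^ β) ∧
      (if s₃ then c * x₁ < x₃ ^ γ else c * x₁ > x₃ ^ γ) := by
  have hcα : (0:ℝ) < c ^ α := Real.rpow_pos_of_pos hc α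
  rcases lt_or_gt_of_ne h with hlt | hgt
  · -- β < α * γ : choose thin, thick, thin
    obtain ⟨δ, hδ, hkey⟩ := key_small (b / (a * c ^ α)) β (α * γ - β)
      (div_pos hb (mul_pos ha hcα)) (by linarith)
    refine ⟨true, false, true, δ, hδ, ?_⟩
    rintro ⟨x₁, x₂, x₃, ⟨h1, h1δ⟩, ⟨h2, h2δ⟩, ⟨h3, h3δ⟩, H1, H2, H3⟩
    simp only [Bool.false_eq_true, if_true, if_false] at H1 H2 H3
    apply hkey x₃ h3 h3δ
    have hβd : β + (α * γ - β) = α * γ := by ring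
    rw [hβd]
    have hx1 : x₁ < x₃ ^ γ / c := by rw [lt_div_iff₀ hc]; linarith
    have hx1α : x₁ ^ α < (x₃ ^ γ / c) ^ α :=
      Real.rpow_lt_rpow h1.le hx1 (by linarith)
    have hdiv : (x₃ ^ γ / c) ^ α = x₃ ^ (α * γ) / c ^ α := by
      rw [Real.div_rpow (Real.rpow_nonneg h3.le γ) hc.le, ← Real.rpow_mul h3.le,
        mul_comm γ α]
    rw [hdiv] at hx1α
    have e2 : b * x₂ < b * x₁ ^ α / a := by rw [lt_div_iff₀ ha]; nlinarith
    have e3 : b * x₁ ^ α / a < b * (x₃ ^ (α * γ) / c ^ α) / a := by gcongr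
    have e4 : b * (x₃ ^ (α * γ) / c ^ α) / a = b / (a * c ^ α) * x₃ ^ (α * γ) := by
      field_simp
    linarith
  · -- β > α * γ : choose thick, thin, thick
    obtain ⟨δ, hδ, hkey⟩ := key_small (a * c ^ α / b) (α * γ) (β - α * γ)
      (div_pos (mul_pos ha hcα) hb) (by linarith)
    refine ⟨false, true, false, δ, hδ, ?_⟩
    rintro ⟨x₁, x₂, x₃, ⟨h1, h1δ⟩, ⟨h2, h2δ⟩, ⟨h3, h3δ⟩, H1, H2, H3⟩
    simp only [Bool.false_eq_true, if_true, if_false] at H1 H2 H3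
    apply hkey x₃ h3 h3δ
    have hβd : α * γ + (β - α * γ) = β := by ring
    rw [hβd]
    have hx1 : x₃ ^ γ / c < x₁ := by rw [div_lt_iff₀ hc]; linarith
    have hx1α : (x₃ ^ γ / c) ^ α < x₁ ^ α :=
      Real.rpow_lt_rpow (by positivity) hx1 (by linarith)
    have hdiv : (x₃ ^ γ / c) ^ α = x₃ ^ (α * γ) / c ^ α := by
      rw [Real.div_rpow (Real.rpow_nonneg h3.le γ) hc.le, ← Real.rpow_mul h3.le,
        mul_comm γ α]
    rw [hdiv] at hx1α
    have e2 : b * x₁ ^ α / a < b * x₂ := by rw [div_lt_iff₀ ha]; nlinarith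
    have e3 : b * (x₃ ^ (α * γ) / c ^ α) / a < b * x₁ ^ α / a := by gcongr
    have e4 : b * (x₃ ^ (α * γ) / c ^ α) / a = b / (a * c ^ α) * x₃ ^ (α * γ) := by
      field_simp
    -- from x₃^(αγ) * (b/(a c^α)) < b*x₂ < x₃^β, conclude x₃^(αγ) < (a c^α/b) * x₃^β
    have hfin : b / (a * c ^ α) * x₃ ^ (α * γ) < x₃ ^ β := by linarith
    rw [div_mul_eq_mul_div, div_lt_iff₀ (mul_pos ha hcα)] at hfin
    rw [div_mul_eq_mul_div, lt_div_iff₀ hb]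
    linarith
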